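/- Let G = (V,E,C) be a finite connected weighted graph with n vertices. Then the weighted sum of expected hitting times over all directed edges satisfies ∑_{(x,y) : c_{xy} > 0} E^x(τ_y) · c_{xy} / (∑_{(w,u) : c_{wu} > 0} c_{wu}) = n − 1, where both sums range over ordered pairs of adjacent vertices. -/
import Mathlib


open Finset

variable {V : Type*} [Fintype V] [DecidableEq V]

/-- The weight (generalized degree) of a node: `μ_x = ∑_y c x y`. -/
noncomputable def nodeWeight (c : V → V → ℝ) (x : V) : ℝ := ∑ y, c x y

/-- Transition probabilities of the random walk: `p x y = c x y / μ x`. -/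
noncomputable def transProb (c : V → V → ℝ) (x y : V) : ℝ := c x y / nodeWeight c x

/-- The transition matrix killed at the target node `y` (rows at `y` set to zero), so that
`(killed c y ^ n) x z = P^x(X_0 ≠ y, …, X_{n-1} ≠ y, X_n = z)`. -/
noncomputable def killed (c : V → V → ℝ) (y : V) : Matrix V V ℝ :=
  Matrix.of fun u v => if u = y then 0 else transProb c u v

/-- The survival probability `P^x(τ_y > n)` of the walk started at `x`. -/
noncomputable def survival (c : V → V → ℝ) (x y : V) (n : ℕ) : ℝ :=
  ∑ z ∈ Finset.univ.erase y, (killed c y ^ n) x z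

/-- The expected hitting time `E^x(τ_y) = ∑_{n ≥ 0} P^x(τ_y > n)`. -/
noncomputable def hitExp (c : V → V → ℝ) (x y : V) : ℝ := ∑' n : ℕ, survival c x y n

/-- `U_z^{xy}`: the expected number of times `0 ≤ k < τ_y` with `X_k = z`, for the walk
started at `x`. -/
noncomputable def visitExp (c : V → V → ℝ) (x y z : V) : ℝ :=
  if z = y then 0 else ∑' n : ℕ, (killed c y ^ n) x z

section Aux

variable {c : V → V → ℝ} {y : V}

lemma killed_apply (u v : V) :
    killed c y u v = if u = y then 0 else c u v / nodeWeight c u := rfl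

lemma killed_apply_y (v : V) : killed c y y v = 0 := by
  rw [killed_apply, if_pos rfl]

lemma killed_nonneg (hnn : ∀ u v, 0 ≤ c u v) (hμ : ∀ x, 0 < nodeWeight c x) (u v : V) :
    0 ≤ killed c y u v := by
  rw [killed_apply]
  split
  · exact le_rfl
  · exact div_nonneg (hnn u v) (hμ u).le

lemma killed_row_sum (hμ : ∀ x, 0 < nodeWeight c x) {u : V} (hu : u ≠ y) :
    ∑ v, killed c y u v = 1 := by
  simp only [killed_apply, if_neg hu]
  have h : ∑ v, c u v = nodeWeight c u := rfl
  rw [← Finset.sum_div, h, div_self (hμ u).ne']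

lemma killed_row_sum_le (hμ : ∀ x, 0 < nodeWeight c x) (u : V) :
    ∑ v, killed c y u v ≤ 1 := by
  by_cases hu : u = y
  · subst hu
    simp [killed_apply_y]
  · exact (killed_row_sum hμ hu).le

lemma killed_pow_nonneg (hnn : ∀ u v, 0 ≤ c u v) (hμ : ∀ x, 0 < nodeWeight c x) :
    ∀ (n : ℕ) (u v : V), 0 ≤ (killed c y ^ n) u v := by
  intro n
  induction n with
  | zero =>
    intro u v
    rw [pow_zero, Matrix.one_apply]
    split <;> norm_num
  | succ n ih =>
    intro u v
    rw [pow_succ, Matrix.mul_apply]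
    exact Finset.sum_nonneg fun w _ => mul_nonneg (ih u w) (killed_nonneg hnn hμ w v)

lemma killed_pow_apply_y (n : ℕ) {z : V} (hz : z ≠ y) : (killed c y ^ n) y z = 0 := by
  cases n with
  | zero => rw [pow_zero, Matrix.one_apply, if_neg (Ne.symm hz)]
  | succ n =>
    rw [pow_succ', Matrix.mul_apply]
    simp [killed_apply_y]

lemma survival_def (x : V) (n : ℕ) :
    survival c x y n = ∑ z ∈ Finset.univ.erase y, (killed c y ^ n) x z := rfl

lemma survival_nonneg (hnn : ∀ u v, 0 ≤ c u v) (hμ : ∀ x, 0 < nodeWeight c x) (x : V) (n : ℕ) :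
    0 ≤ survival c x y n :=
  Finset.sum_nonneg fun z _ => killed_pow_nonneg hnn hμ n x z

lemma survival_zero (x : V) : survival c x y 0 = if x = y then 0 else 1 := by
  rw [survival_def]
  simp only [pow_zero, Matrix.one_apply]
  rw [Finset.sum_ite_eq]
  by_cases hx : x = y <;> simp [Finset.mem_erase, hx]

end Aux

lemma survival_self (c : V → V → ℝ) (x : V) (n : ℕ) : survival c x x n = 0 :=
  Finset.sum_eq_zero fun z hz => killed_pow_apply_y n (Finset.mem_erase.mp hz).1

section Aux2

variable {c : V → V → ℝ} {y : V}

lemma survival_succ (x : V) (n : ℕ) :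
    survival c x y (n + 1) = ∑ w, killed c y x w * survival c w y n := by
  unfold survival
  simp only [pow_succ', Matrix.mul_apply]
  rw [Finset.sum_comm]
  exact Finset.sum_congr rfl fun w _ => (Finset.mul_sum _ _ _).symm

lemma survival_le_one (hnn : ∀ u v, 0 ≤ c u v) (hμ : ∀ x, 0 < nodeWeight c x)
    (x : V) (n : ℕ) : survival c x y n ≤ 1 := by
  induction n generalizing x with
  | zero =>
    rw [survival_zero]
    split <;> norm_num
  | succ n ih =>
    rw [survival_succ]
    calc ∑ w, killed c y x w * survival c w y n
        ≤ ∑ w, killed c y x w * 1 :=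
          Finset.sum_le_sum fun w _ =>
            mul_le_mul_of_nonneg_left (ih w) (killed_nonneg hnn hμ x w)
      _ ≤ 1 := by simpa using killed_row_sum_le hμ x

lemma survival_succ_le (hnn : ∀ u v, 0 ≤ c u v) (hμ : ∀ x, 0 < nodeWeight c x)
    (x : V) (n : ℕ) : survival c x y (n + 1) ≤ survival c x y n := by
  induction n generalizing x with
  | zero =>
    by_cases hx : x = y
    · subst hx
      rw [survival_self, survival_self]
    · rw [survival_zero, if_neg hx]
      exact survival_le_one hnn hμ x 1
  | succ n ih =>
    rw [survival_succ, survival_succ x n]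
    exact Finset.sum_le_sum fun w _ =>
      mul_le_mul_of_nonneg_left (ih w) (killed_nonneg hnn hμ x w)

lemma survival_anti (hnn : ∀ u v, 0 ≤ c u v) (hμ : ∀ x, 0 < nodeWeight c x)
    (x : V) {m n : ℕ} (h : m ≤ n) : survival c x y n ≤ survival c x y m := by
  induction h with
  | refl => exact le_rfl
  | step h ih => exact le_trans (survival_succ_le hnn hμ x _) ih

lemma survival_add_le (hnn : ∀ u v, 0 ≤ c u v) (hμ : ∀ x, 0 < nodeWeight c x)
    {b : ℕ} {B : ℝ} (hB0 : 0 ≤ B) (hB : ∀ w, survival c w y b ≤ B) (x : V) (a : ℕ) :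
    survival c x y (a + b) ≤ B * survival c x y a := by
  have key : survival c x y (a + b) = ∑ w, (killed c y ^ a) x w * survival c w y b := by
    unfold survival
    simp only [pow_add, Matrix.mul_apply]
    rw [Finset.sum_comm]
    exact Finset.sum_congr rfl fun w _ => (Finset.mul_sum _ _ _).symm
  have h1 : ∑ w, (killed c y ^ a) x w * survival c w y b
      = ∑ w ∈ Finset.univ.erase y, (killed c y ^ a) x w * survival c w y b := by
    rw [← Finset.add_sum_erase _ _ (Finset.mem_univ y), survival_self, mul_zero, zero_add]
  rw [key, h1]
  calc ∑ w ∈ Finset.univ.erase y, (killed c y ^ a) x w * survival c w y b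
      ≤ ∑ w ∈ Finset.univ.erase y, (killed c y ^ a) x w * B :=
        Finset.sum_le_sum fun w _ =>
          mul_le_mul_of_nonneg_left (hB w) (killed_pow_nonneg hnn hμ a x w)
    _ = B * survival c x y a := by
        rw [← Finset.sum_mul, mul_comm]
        rfl

lemma exists_survival_lt_one (hsym : ∀ u v, c u v = c v u) (hnn : ∀ u v, 0 ≤ c u v)
    (hμ : ∀ x, 0 < nodeWeight c x) :
    ∀ {a e : V} (_ : (SimpleGraph.fromRel fun u v : V => 0 < c u v).Walk a e),
      ∃ N, survival c a e N < 1 := by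
  intro a e w
  induction w with
  | nil => exact ⟨0, by rw [survival_self]; norm_num⟩
  | @cons a b d h p ih =>
    obtain ⟨N, hN⟩ := ih
    by_cases ha : a = d
    · exact ⟨0, by rw [ha, survival_self]; norm_num⟩
    · refine ⟨N + 1, ?_⟩
      rw [survival_succ]
      have hQb : 0 < killed c d a b := by
        rw [killed_apply, if_neg ha]
        rw [SimpleGraph.fromRel_adj] at h
        have hcab : 0 < c a b := by
          rcases h.2 with h' | h'
          · exact h'
          · rw [hsym]; exact h'
        exact div_pos hcab (hμ a)
      have hlt : ∑ w, killed c d a w * survival c w d N < ∑ w, killed c d a w := by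
        refine Finset.sum_lt_sum (fun i _ => ?_) ⟨b, Finset.mem_univ b, ?_⟩
        · exact mul_le_of_le_one_right (killed_nonneg hnn hμ a i) (survival_le_one hnn hμ i N)
        · calc killed c d a b * survival c b d N < killed c d a b * 1 :=
                mul_lt_mul_of_pos_left hN hQb
            _ = killed c d a b := mul_one _
      rwa [killed_row_sum hμ ha] at hlt

lemma exists_uniform_N (hsym : ∀ u v, c u v = c v u) (hnn : ∀ u v, 0 ≤ c u v)
    (hμ : ∀ x, 0 < nodeWeight c x)
    (hconn : (SimpleGraph.fromRel fun u v : V => 0 < c u v).Connected) :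
    ∃ N : ℕ, 1 ≤ N ∧ ∀ x, survival c x y N < 1 := by
  have h : ∀ x : V, ∃ N, survival c x y N < 1 := fun x => by
    obtain ⟨w⟩ := hconn.preconnected x y
    exact exists_survival_lt_one hsym hnn hμ w
  choose f hf using h
  refine ⟨max 1 (Finset.univ.sup f), le_max_left _ _, fun x => ?_⟩
  exact lt_of_le_of_lt
    (survival_anti hnn hμ x ((Finset.le_sup (Finset.mem_univ x)).trans (le_max_right _ _)))
    (hf x)

lemma summable_survival (hsym : ∀ u v, c u v = c v u) (hnn : ∀ u v, 0 ≤ c u v)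
    (hμ : ∀ x, 0 < nodeWeight c x)
    (hconn : (SimpleGraph.fromRel fun u v : V => 0 < c u v).Connected) (x : V) :
    Summable fun n => survival c x y n := by
  obtain ⟨N, hN1, hN⟩ := exists_uniform_N hsym hnn hμ hconn (y := y)
  haveI : Nonempty V := ⟨y⟩
  obtain ⟨r, hr0, hrB, hr1⟩ : ∃ r : ℝ, 0 ≤ r ∧ (∀ x, survival c x y N ≤ r) ∧ r < 1 := by
    refine ⟨max 0 (Finset.univ.sup' Finset.univ_nonempty fun x => survival c x y N),
      le_max_left _ _, fun x => ?_, ?_⟩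
    · exact le_trans (Finset.le_sup' (fun x => survival c x y N) (Finset.mem_univ x))
        (le_max_right _ _)
    · apply max_lt one_pos
      exact (Finset.sup'_lt_iff _).mpr fun i _ => hN i
  have hgeo : ∀ (k : ℕ) (x : V), survival c x y (k * N) ≤ r ^ k := by
    intro k
    induction k with
    | zero => intro x; simpa using survival_le_one hnn hμ x 0
    | succ k ih =>
      intro x
      have h1 : survival c x y (k * N + N) ≤ r * survival c x y (k * N) :=
        survival_add_le hnn hμ hr0 hrB x (k * N)
      calc survival c x y ((k + 1) * N) = survival c x y (k * N + N) := by
            rw [Nat.succ_mul]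
        _ ≤ r * survival c x y (k * N) := h1
        _ ≤ r * r ^ k := mul_le_mul_of_nonneg_left (ih x) hr0
        _ = r ^ (k + 1) := (pow_succ' r k).symm
  have hbound : ∀ n, survival c x y n ≤ r ^ (n / N) := fun n =>
    (survival_anti hnn hμ x (Nat.div_mul_le_self n N)).trans (hgeo (n / N) x)
  have key : ∀ m : ℕ, ∑ i ∈ Finset.range (N * m), r ^ (i / N)
      = ∑ q ∈ Finset.range m, (N : ℝ) * r ^ q := by
    intro m
    induction m with
    | zero => simp
    | succ m ih =>
      rw [Nat.mul_succ, Finset.sum_range_add, ih, Finset.sum_range_succ]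
      congr 1
      have h2 : ∀ j ∈ Finset.range N, r ^ ((N * m + j) / N) = r ^ m := by
        intro j hj
        rw [Finset.mem_range] at hj
        rw [Nat.mul_add_div (by omega), Nat.div_eq_of_lt hj, add_zero]
      rw [Finset.sum_congr rfl h2, Finset.sum_const, Finset.card_range, nsmul_eq_mul]
  apply summable_of_sum_range_le (c := (N : ℝ) * (1 - r)⁻¹) (fun n => survival_nonneg hnn hμ x n)
  intro m
  calc ∑ i ∈ Finset.range m, survival c x y i
      ≤ ∑ i ∈ Finset.range m, r ^ (i / N) :=
        Finset.sum_le_sum fun i _ => hbound i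
    _ ≤ ∑ i ∈ Finset.range (N * m), r ^ (i / N) :=
        Finset.sum_le_sum_of_subset_of_nonneg
          (Finset.range_subset_range.mpr (Nat.le_mul_of_pos_left m (by omega)))
          (fun i _ _ => pow_nonneg hr0 _)
    _ = ∑ q ∈ Finset.range m, (N : ℝ) * r ^ q := key m
    _ = (N : ℝ) * ∑ q ∈ Finset.range m, r ^ q := by rw [Finset.mul_sum]
    _ ≤ (N : ℝ) * (1 - r)⁻¹ := by
        apply mul_le_mul_of_nonneg_left _ (Nat.cast_nonneg N)
        have h3 := geom_sum_Ico_le_of_lt_one hr0 hr1 (m := 0) (n := m)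
        simpa [← Finset.range_eq_Ico, one_div] using h3

lemma summable_entry (hsym : ∀ u v, c u v = c v u) (hnn : ∀ u v, 0 ≤ c u v)
    (hμ : ∀ x, 0 < nodeWeight c x)
    (hconn : (SimpleGraph.fromRel fun u v : V => 0 < c u v).Connected) (x : V)
    {z : V} (hz : z ≠ y) :
    Summable fun n => (killed c y ^ n) x z := by
  refine Summable.of_nonneg_of_le (fun n => killed_pow_nonneg hnn hμ n x z) (fun n => ?_)
    (summable_survival hsym hnn hμ hconn (y := y) x)
  show (killed c y ^ n) x z ≤ ∑ w ∈ Finset.univ.erase y, (killed c y ^ n) x w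
  exact Finset.single_le_sum (fun w _ => killed_pow_nonneg hnn hμ n x w)
    (Finset.mem_erase.mpr ⟨hz, Finset.mem_univ z⟩)

lemma hitExp_eq_sum (hsym : ∀ u v, c u v = c v u) (hnn : ∀ u v, 0 ≤ c u v)
    (hμ : ∀ x, 0 < nodeWeight c x)
    (hconn : (SimpleGraph.fromRel fun u v : V => 0 < c u v).Connected) (x : V) :
    hitExp c x y = ∑ z, visitExp c x y z := by
  have h1 : ∑ z, visitExp c x y z
      = ∑ z ∈ Finset.univ.erase y, ∑' n, (killed c y ^ n) x z := by
    rw [← Finset.add_sum_erase _ (fun z => visitExp c x y z) (Finset.mem_univ y)]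
    rw [show visitExp c x y y = 0 by simp [visitExp], zero_add]
    exact Finset.sum_congr rfl fun z hz => if_neg (Finset.mem_erase.mp hz).1
  rw [h1]
  unfold hitExp survival
  exact Summable.tsum_finsetSum fun z hz => summable_entry hsym hnn hμ hconn x (Finset.mem_erase.mp hz).1

lemma killed_pow_rev (hsym : ∀ u v, c u v = c v u) (hnn : ∀ u v, 0 ≤ c u v)
    (hμ : ∀ x, 0 < nodeWeight c x) (n : ℕ) :
    ∀ {x z : V}, x ≠ y → z ≠ y →
      nodeWeight c x * (killed c y ^ n) x z = nodeWeight c z * (killed c y ^ n) z x := by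
  induction n with
  | zero =>
    intro x z hx hz
    by_cases hxz : x = z
    · subst hxz; rfl
    · rw [pow_zero, Matrix.one_apply, Matrix.one_apply, if_neg hxz, if_neg (Ne.symm hxz),
        mul_zero, mul_zero]
  | succ n ih =>
    intro x z hx hz
    conv_lhs => rw [pow_succ, Matrix.mul_apply]
    conv_rhs => rw [pow_succ', Matrix.mul_apply]
    rw [Finset.mul_sum, Finset.mul_sum]
    refine Finset.sum_congr rfl fun w _ => ?_
    by_cases hw : w = y
    · subst hw
      rw [killed_apply_y, killed_pow_apply_y n hx]
      simp
    · have h1 : nodeWeight c x * ((killed c y ^ n) x w * killed c y w z)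
          = (nodeWeight c x * (killed c y ^ n) x w) * killed c y w z := by ring
      have h2 : nodeWeight c w * killed c y w z = nodeWeight c z * killed c y z w := by
        rw [killed_apply, killed_apply, if_neg hw, if_neg hz]
        show nodeWeight c w * (c w z / nodeWeight c w) = nodeWeight c z * (c z w / nodeWeight c z)
        rw [← mul_div_assoc, ← mul_div_assoc, mul_div_cancel_left₀ _ (hμ w).ne',
          mul_div_cancel_left₀ _ (hμ z).ne']
        exact hsym w z
      rw [h1, ih hx hw]
      calc (nodeWeight c w * (killed c y ^ n) w x) * killed c y w z
          = (nodeWeight c w * killed c y w z) * (killed c y ^ n) w x := by ring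
        _ = (nodeWeight c z * killed c y z w) * (killed c y ^ n) w x := by rw [h2]
        _ = nodeWeight c z * (killed c y z w * (killed c y ^ n) w x) := by ring

lemma visitExp_start_y (z : V) : visitExp c y y z = 0 := by
  unfold visitExp
  split
  · rfl
  · next hz => rw [tsum_congr fun n => killed_pow_apply_y n hz, tsum_zero]

lemma visitExp_rev (hsym : ∀ u v, c u v = c v u) (hnn : ∀ u v, 0 ≤ c u v)
    (hμ : ∀ x, 0 < nodeWeight c x) (x z : V) :
    nodeWeight c x * visitExp c x y z = nodeWeight c z * visitExp c z y x := by
  by_cases hz : z = y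
  · rw [show visitExp c x y z = 0 by simp [visitExp, hz], hz, visitExp_start_y,
      mul_zero, mul_zero]
  · by_cases hx : x = y
    · rw [hx, visitExp_start_y, show visitExp c z y y = 0 by simp [visitExp],
        mul_zero, mul_zero]
    · simp only [visitExp, if_neg hz, if_neg hx]
      rw [← tsum_mul_left, ← tsum_mul_left]
      exact tsum_congr fun n => killed_pow_rev hsym hnn hμ n hx hz

lemma survival_succ' (hμ : ∀ x, 0 < nodeWeight c x) (x : V) (n : ℕ) :
    survival c x y (n + 1) = survival c x y n - (killed c y ^ (n + 1)) x y := by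
  have h0 : ∀ w : V, ∑ z ∈ Finset.univ.erase y, killed c y w z
      = (if w = y then (0 : ℝ) else 1) - killed c y w y := by
    intro w
    rw [Finset.sum_erase_eq_sub (Finset.mem_univ y)]
    by_cases hw : w = y
    · subst hw
      simp [killed_apply_y]
    · rw [killed_row_sum hμ hw, if_neg hw]
  have main : survival c x y (n + 1) = ∑ w, (killed c y ^ n) x w *
      ((if w = y then (0 : ℝ) else 1) - killed c y w y) := by
    unfold survival
    simp only [pow_succ, Matrix.mul_apply]
    rw [Finset.sum_comm]
    refine Finset.sum_congr rfl fun w _ => ?_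
    rw [← Finset.mul_sum, h0 w]
  rw [main]
  simp only [mul_sub]
  rw [Finset.sum_sub_distrib]
  have hA : ∑ w, (killed c y ^ n) x w * (if w = y then (0 : ℝ) else 1) = survival c x y n := by
    rw [← Finset.add_sum_erase _ _ (Finset.mem_univ y), if_pos rfl, mul_zero, zero_add]
    unfold survival
    exact Finset.sum_congr rfl fun w hw => by rw [if_neg (Finset.mem_erase.mp hw).1, mul_one]
  have hB : ∑ w, (killed c y ^ n) x w * killed c y w y = (killed c y ^ (n + 1)) x y := by
    rw [pow_succ, Matrix.mul_apply]
  rw [hA, hB]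

lemma visit_hit (hsym : ∀ u v, c u v = c v u) (hnn : ∀ u v, 0 ≤ c u v)
    (hμ : ∀ x, 0 < nodeWeight c x)
    (hconn : (SimpleGraph.fromRel fun u v : V => 0 < c u v).Connected)
    {z : V} (hz : z ≠ y) :
    ∑ x, visitExp c z y x * killed c y x y = 1 := by
  have hpt : ∀ x, visitExp c z y x * killed c y x y
      = ∑' n, (killed c y ^ n) z x * killed c y x y := by
    intro x
    by_cases hx : x = y
    · subst hx
      rw [killed_apply_y, mul_zero]
      simp
    · simp only [visitExp, if_neg hx]
      rw [tsum_mul_right]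
  rw [Finset.sum_congr rfl fun x _ => hpt x]
  rw [← Summable.tsum_finsetSum (f := fun (x : V) (n : ℕ) => (killed c y ^ n) z x * killed c y x y)]
  swap
  · intro x _
    by_cases hx : x = y
    · subst hx
      simp only [killed_apply_y, mul_zero]
      exact summable_zero
    · exact (summable_entry hsym hnn hμ hconn z hx).mul_right _
  have hstep : ∀ n, ∑ x, (killed c y ^ n) z x * killed c y x y
      = survival c z y n - survival c z y (n + 1) := by
    intro n
    have h1 : ∑ x, (killed c y ^ n) z x * killed c y x y = (killed c y ^ (n + 1)) z y := by
      rw [pow_succ, Matrix.mul_apply]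
    rw [h1, survival_succ' hμ z n]
    ring
  rw [tsum_congr hstep]
  have hsum := summable_survival hsym hnn hμ hconn (y := y) z
  have hsum' : Summable fun n => survival c z y (n + 1) := (summable_nat_add_iff 1).mpr hsum
  rw [Summable.tsum_sub hsum hsum', Summable.tsum_eq_zero_add hsum, survival_zero, if_neg hz]
  ring

lemma col_sum (hsym : ∀ u v, c u v = c v u) (hnn : ∀ u v, 0 ≤ c u v)
    (hμ : ∀ x, 0 < nodeWeight c x)
    (hconn : (SimpleGraph.fromRel fun u v : V => 0 < c u v).Connected) :
    ∑ x, hitExp c x y * c x y = (∑ z, nodeWeight c z) - nodeWeight c y := by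
  have step1 : ∀ x : V, hitExp c x y * c x y = ∑ z, visitExp c x y z * c x y := by
    intro x
    rw [hitExp_eq_sum hsym hnn hμ hconn, Finset.sum_mul]
  rw [Finset.sum_congr rfl fun x _ => step1 x, Finset.sum_comm]
  have step2 : ∀ z x : V, visitExp c x y z * c x y
      = (nodeWeight c z * visitExp c z y x) * killed c y x y := by
    intro z x
    by_cases hx : x = y
    · subst hx
      rw [visitExp_start_y, killed_apply_y, zero_mul, mul_zero]
    · have hc : c x y = nodeWeight c x * killed c y x y := by
        rw [killed_apply, if_neg hx]
        show c x y = nodeWeight c x * (c x y / nodeWeight c x)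
        rw [← mul_div_assoc, mul_div_cancel_left₀ _ (hμ x).ne']
      rw [hc]
      calc visitExp c x y z * (nodeWeight c x * killed c y x y)
          = (nodeWeight c x * visitExp c x y z) * killed c y x y := by ring
        _ = (nodeWeight c z * visitExp c z y x) * killed c y x y := by
            rw [visitExp_rev hsym hnn hμ x z]
  rw [Finset.sum_congr rfl fun z _ => Finset.sum_congr rfl fun x _ => step2 z x]
  have step3 : ∀ z : V, ∑ x, (nodeWeight c z * visitExp c z y x) * killed c y x y
      = nodeWeight c z * ∑ x, visitExp c z y x * killed c y x y := by
    intro z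
    rw [Finset.mul_sum]
    exact Finset.sum_congr rfl fun x _ => by ring
  rw [Finset.sum_congr rfl fun z _ => step3 z]
  rw [← Finset.add_sum_erase _ _ (Finset.mem_univ y)]
  have hy0 : ∑ x, visitExp c y y x * killed c y x y = 0 :=
    Finset.sum_eq_zero fun x _ => by rw [visitExp_start_y, zero_mul]
  rw [hy0, mul_zero, zero_add]
  rw [Finset.sum_congr rfl fun z hzm => by
    rw [visit_hit hsym hnn hμ hconn (Finset.mem_erase.mp hzm).1, mul_one]]
  rw [Finset.sum_erase_eq_sub (Finset.mem_univ y)]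

end Aux2

/-- For a finite connected weighted graph with `n` vertices, the weighted
sum of expected hitting times over all directed edges satisfies
`∑_{(x,y) : c_{xy} > 0} E^x(τ_y) · c_{xy} / (∑_{(w,u) : c_{wu} > 0} c_{wu}) = n − 1`,
both sums ranging over ordered pairs of adjacent vertices. -/
theorem weighted_sum_hitting_times
    (c : V → V → ℝ) (hsym : ∀ u v, c u v = c v u) (hnn : ∀ u v, 0 ≤ c u v)
    (hconn : (SimpleGraph.fromRel fun u v : V => 0 < c u v).Connected) :
    ∑ p ∈ Finset.univ.filter (fun p : V × V => 0 < c p.1 p.2),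
        hitExp c p.1 p.2 * c p.1 p.2 /
          (∑ q ∈ Finset.univ.filter (fun q : V × V => 0 < c q.1 q.2), c q.1 q.2)
      = (Fintype.card V : ℝ) - 1 := by
  haveI : Nonempty V := hconn.nonempty
  have hitself : ∀ x : V, hitExp c x x = 0 := by
    intro x
    unfold hitExp
    rw [tsum_congr (survival_self c x), tsum_zero]
  by_cases hcard : Fintype.card V ≤ 1
  · haveI : Subsingleton V := Fintype.card_le_one_iff_subsingleton.mp hcard
    have hc1 : Fintype.card V = 1 := le_antisymm hcard Fintype.card_pos
    have hz : ∀ p : V × V, hitExp c p.1 p.2 = 0 := fun p => by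
      rw [Subsingleton.elim p.2 p.1]
      exact hitself p.1
    rw [Finset.sum_congr rfl fun p _ => by rw [hz p, zero_mul, zero_div]]
    rw [Finset.sum_const_zero, hc1]
    norm_num
  · push_neg at hcard
    have hμ : ∀ x : V, 0 < nodeWeight c x := by
      intro x
      obtain ⟨z, hzx⟩ := Fintype.exists_ne_of_one_lt_card hcard x
      obtain ⟨w⟩ := hconn.preconnected x z
      have hadj : ∃ b, 0 < c x b := by
        cases w with
        | nil => exact absurd rfl hzx
        | cons h p =>
          rw [SimpleGraph.fromRel_adj] at h
          rcases h.2 with h' | h'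
          · exact ⟨_, h'⟩
          · exact ⟨_, by rw [hsym]; exact h'⟩
      obtain ⟨b, hb⟩ := hadj
      have : (0 : ℝ) < ∑ v, c x v :=
        lt_of_lt_of_le hb (Finset.single_le_sum (fun i _ => hnn x i) (Finset.mem_univ b))
      exact this
    have hDval : (∑ q ∈ Finset.univ.filter (fun q : V × V => 0 < c q.1 q.2), c q.1 q.2)
        = ∑ x, nodeWeight c x := by
      rw [Finset.sum_filter]
      have h1 : ∀ p : V × V, (if 0 < c p.1 p.2 then c p.1 p.2 else 0) = c p.1 p.2 := by
        intro p
        split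
        · rfl
        · next h => exact (le_antisymm (not_lt.mp h) (hnn _ _)).symm
      rw [Finset.sum_congr rfl fun p _ => h1 p]
      rw [Fintype.sum_prod_type]
      rfl
    have hD0 : (0 : ℝ) < ∑ q ∈ Finset.univ.filter (fun q : V × V => 0 < c q.1 q.2), c q.1 q.2 := by
      rw [hDval]
      exact Finset.sum_pos (fun x _ => hμ x) Finset.univ_nonempty
    have hnum : ∑ p ∈ Finset.univ.filter (fun p : V × V => 0 < c p.1 p.2),
        hitExp c p.1 p.2 * c p.1 p.2
        = ((Fintype.card V : ℝ) - 1) *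
            ∑ q ∈ Finset.univ.filter (fun q : V × V => 0 < c q.1 q.2), c q.1 q.2 := by
      rw [Finset.sum_filter]
      have h1 : ∀ p : V × V, (if 0 < c p.1 p.2 then hitExp c p.1 p.2 * c p.1 p.2 else 0)
          = hitExp c p.1 p.2 * c p.1 p.2 := by
        intro p
        split
        · rfl
        · next h =>
          have hc0 : c p.1 p.2 = 0 := le_antisymm (not_lt.mp h) (hnn _ _)
          rw [hc0, mul_zero]
      rw [Finset.sum_congr rfl fun p _ => h1 p]
      rw [Fintype.sum_prod_type, Finset.sum_comm]
      rw [Finset.sum_congr rfl fun y _ => col_sum hsym hnn hμ hconn]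
      rw [Finset.sum_sub_distrib, Finset.sum_const, Finset.card_univ, nsmul_eq_mul, hDval]
      ring
    rw [← Finset.sum_div, hnum, mul_div_cancel_right₀ _ hD0.ne']
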